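/- Let G = (V,E) be a finite non-bipartite simple graph and I ⊆ V an independent set such that G∖I is bipartite, and suppose the contraction G/I has odd girth 2ρ−1 (ρ ≥ 2 an integer). Each odd cycle of G/I of length 2ρ−1 passes through the contracted vertex v^I and corresponds in G to a path a₀a₁…a_{2ρ−3} in G∖I together with edges {u, a₀} and {u', a_{2ρ−3}} with u, u' ∈ I (possibly u = u'); to such a cycle C associate y^C : E → ℝ≥0 taking value 1/ρ on {u,a₀}, on {u',a_{2ρ−3}} and on the path edges {a_{2i−1}, a_{2i}} for 1 ≤ i ≤ ρ−2, and 0 on all other edges, and define w^C(v) := y^C(δ(v)). Then for every convex combination w of the functions w^C over all such shortest odd cycles C: OPT(G,w) = 1, w(I) = 2/ρ, OPT(G∖I, w) = (ρ−1)/ρ, and hence w(I) + OPT(G∖I, w) = (1 + 1/ρ) · OPT(G, w). -/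

import Mathlib

open Finset

/-- `C` is a vertex cover of `G`. -/
def IsVC {V : Type*} (G : SimpleGraph V) (C : Finset V) : Prop :=
  ∀ ⦃u v : V⦄, G.Adj u v → u ∈ C ∨ v ∈ C

/-- `OPT G w` : minimum weight of a vertex cover of `G`. -/
noncomputable def OPT {V : Type*} [Fintype V] (G : SimpleGraph V) (w : V → ℝ) : ℝ :=
  sInf {t : ℝ | ∃ C : Finset V, IsVC G C ∧ t = ∑ v ∈ C, w v}

/-- `LPval G w` : optimal value of the standard vertex cover LP relaxation. -/
noncomputable def LPval {V : Type*} [Fintype V] (G : SimpleGraph V) (w : V → ℝ) : ℝ :=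
  sInf {t : ℝ | ∃ x : V → ℝ, (∀ v, 0 ≤ x v) ∧ (∀ ⦃u v : V⦄, G.Adj u v → 1 ≤ x u + x v) ∧
    t = ∑ v, w v * x v}

/-- The graph `G ∖ S` (vertices of `S` kept as isolated vertices). -/
def Gdel {V : Type*} (G : SimpleGraph V) (S : Set V) : SimpleGraph V :=
  SimpleGraph.fromRel (fun u v => G.Adj u v ∧ u ∉ S ∧ v ∉ S)

open scoped Classical in
/-- Sum of `y` over the set of edges described by `P`. -/
noncomputable def ysum {V : Type*} [Fintype V] [DecidableEq V]
    (y : Sym2 V → ℝ) (P : Sym2 V → Prop) : ℝ :=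
  ∑ e : Sym2 V, if P e then y e else 0

/-- `y` is a dual certificate for `w` : a feasible dual solution with `y(δ(v)) = w v`. -/
def IsDualCert {V : Type*} [Fintype V] [DecidableEq V] (G : SimpleGraph V)
    (w : V → ℝ) (y : Sym2 V → ℝ) : Prop :=
  (∀ e, 0 ≤ y e) ∧ (∀ e, e ∉ G.edgeSet → y e = 0) ∧
    ∀ v : V, ysum y (fun e => e ∈ G.edgeSet ∧ v ∈ e) = w v

/-- Membership in the polytope `Q^W`. -/
def memQW {V : Type*} [Fintype V] [DecidableEq V] (G : SimpleGraph V) (w : V → ℝ) : Prop :=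
  (∀ v, 0 ≤ w v) ∧ (∑ v, w v) = 2 ∧ ∃ y : Sym2 V → ℝ, IsDualCert G w y

/-- `G` has odd girth `n` : it contains an odd cycle of length `n` and no shorter one. -/
def HasOddGirth {V : Type*} (G : SimpleGraph V) (n : ℕ) : Prop :=
  Odd n ∧ (∃ (v : V) (c : G.Walk v v), c.IsCycle ∧ c.length = n) ∧
    ∀ (v : V) (c : G.Walk v v), c.IsCycle → Odd c.length → n ≤ c.length

/-- The contraction `G / S` of the vertex set `S` to a single new vertex `none`. -/
def contract {V : Type*} (G : SimpleGraph V) (S : Set V) :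
    SimpleGraph (Option {v : V // v ∉ S}) :=
  SimpleGraph.fromRel (fun x y =>
    match x, y with
    | some u, some v => G.Adj u.1 v.1
    | some u, none => ∃ s ∈ S, G.Adj u.1 s
    | none, _ => False)

/-- `I` is an independent set of `G`. -/
def IsIndep {V : Type*} (G : SimpleGraph V) (I : Finset V) : Prop :=
  ∀ ⦃u⦄, u ∈ I → ∀ ⦃v⦄, v ∈ I → ¬ G.Adj u v

/-- The fractional chromatic number of `G`. -/
noncomputable def fracChrom {V : Type*} [Fintype V] [DecidableEq V] (G : SimpleGraph V) : ℝ :=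
  sInf {t : ℝ | ∃ y : Finset V → ℝ, (∀ I, 0 ≤ y I) ∧ (∀ I, ¬ IsIndep G I → y I = 0) ∧
    (∀ v : V, 1 ≤ ∑ I : Finset V, if v ∈ I then y I else 0) ∧ t = ∑ I : Finset V, y I}

/-- The data of a shortest odd cycle of `G/I` through the contracted vertex: a path
`a₀ a₁ … a_{2ρ-3}` in `G ∖ I` together with attachment vertices `u, u' ∈ I` adjacent to its
endpoints. -/
def ShortCycData {V : Type*} (G : SimpleGraph V) (I : Finset V) (ρ : ℕ)
    (a : ℕ → V) (u u' : V) : Prop :=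
  u ∈ I ∧ u' ∈ I ∧ (∀ i ≤ 2 * ρ - 3, a i ∉ I) ∧
    (∀ i < 2 * ρ - 3, G.Adj (a i) (a (i + 1))) ∧
    (∀ i ≤ 2 * ρ - 3, ∀ j ≤ 2 * ρ - 3, a i = a j → i = j) ∧
    G.Adj u (a 0) ∧ G.Adj u' (a (2 * ρ - 3))

/-- The dual function `y^C` of such a shortest odd cycle: value `1/ρ` on the two attachment
edges and on the path edges `{a_{2i-1}, a_{2i}}` for `1 ≤ i ≤ ρ-2`, and `0` elsewhere. -/
noncomputable def yCyc {V : Type*} [DecidableEq V] (ρ : ℕ) (a : ℕ → V) (u u' : V) : Sym2 V → ℝ :=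
  fun e => if e = s(u, a 0) ∨ e = s(u', a (2 * ρ - 3)) ∨
      ∃ i ∈ Finset.Icc 1 (ρ - 2), e = s(a (2 * i - 1), a (2 * i))
    then 1 / (ρ : ℝ) else 0


section RBISTAux
set_option linter.unusedSectionVars false
set_option linter.unreachableTactic false
set_option linter.unusedTactic false
open SimpleGraph
namespace RBIST


/-- a path from y to v containing edge s(v,y) has length 1 -/
lemma path_edge_end {W : Type*} {G : SimpleGraph W} :
    ∀ {y v : W} (r : G.Walk y v), r.IsPath → s(v, y) ∈ r.edges → r.length = 1 := by
  intro y v r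
  induction r with
  | nil => simp
  | @cons y z v h q ih =>
    intro hp he
    rw [SimpleGraph.Walk.edges_cons, List.mem_cons] at he
    have hp' := (SimpleGraph.Walk.cons_isPath_iff _ _).mp hp
    rcases he with he | he
    · have hz : z = v := by
        rcases Sym2.eq_iff.mp he with ⟨h1, h2⟩ | ⟨h1, h2⟩ <;> simp [h1, h2]
      subst hz
      cases q with
      | nil => simp
      | cons h' q' =>
        exact absurd (SimpleGraph.Walk.end_mem_support q')
          (by simpa using ((SimpleGraph.Walk.cons_isPath_iff _ _).mp hp'.1).2)
    · exact absurd (SimpleGraph.Walk.snd_mem_support_of_mem_edges q he) hp'.2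

/-- Odd closed walks are at least as long as the shortest odd cycle bound. -/
lemma odd_closed_walk_bound {W : Type*} {G : SimpleGraph W} {n : ℕ}
    (hG : ∀ (v : W) (c : G.Walk v v), c.IsCycle → Odd c.length → n ≤ c.length) :
    ∀ (L : ℕ) (v : W) (p : G.Walk v v), p.length ≤ L → Odd p.length → n ≤ p.length := by
  intro L
  induction L with
  | zero =>
    intro v p hp hodd
    rw [Nat.odd_iff] at hodd; omega
  | succ L ih =>
    intro v p hp hodd
    by_cases hnd : p.support.tail.Nodup
    · cases p with
      | nil => simp [Nat.odd_iff] at hodd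
      | @cons _ y _ h r =>
        have hnd' : r.support.Nodup := by simpa using hnd
        have hr : r.IsPath := SimpleGraph.Walk.IsPath.mk' hnd'
        have he : s(v, y) ∉ r.edges := by
          intro hmem
          have := path_edge_end r hr hmem
          rw [Nat.odd_iff] at hodd
          simp [SimpleGraph.Walk.length_cons, this] at hodd
        exact hG v (SimpleGraph.Walk.cons h r)
          (((SimpleGraph.Walk.cons_isCycle_iff r h)).mpr ⟨hr, he⟩) hodd
    · -- find a duplicated vertex and split
      obtain ⟨x, hx⟩ := List.exists_duplicate_iff_not_nodup.mpr hnd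
      classical
      have hx2 : 2 ≤ p.support.tail.count x := List.duplicate_iff_two_le_count.mp hx
      have hxs : x ∈ p.support := by
        have : x ∈ p.support.tail := hx.mem
        exact List.mem_of_mem_tail this
      set q := p.rotate x hxs with hq
      have hqlen : q.length = p.length := by
        have h1 := SimpleGraph.Walk.take_spec p hxs
        have h2 : (p.takeUntil x hxs).length + (p.dropUntil x hxs).length = p.length := by
          rw [← SimpleGraph.Walk.length_append, h1]
        simp only [hq, SimpleGraph.Walk.rotate, SimpleGraph.Walk.length_append]
        omega
      have hqcount : 2 ≤ q.support.tail.count x := by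
        have h3 := (SimpleGraph.Walk.support_rotate p x hxs).perm.count_eq x
        rw [← hq] at h3
        omega
      cases hq2 : q with
      | nil =>
        rw [hq2] at hqlen
        rw [Nat.odd_iff] at hodd
        simp at hqlen; omega
      | @cons _ z _ hadj r =>
        have hrcount : 2 ≤ r.support.count x := by
          rw [hq2] at hqcount
          simpa using hqcount
        have hxr : x ∈ r.support := by
          rw [← List.count_pos_iff]; omega
        have hsplit := SimpleGraph.Walk.take_spec r hxr
        set r1 := r.takeUntil x hxr with hr1
        set r2 := r.dropUntil x hxr with hr2
        have hlen12 : r1.length + r2.length = r.length := by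
          rw [← SimpleGraph.Walk.length_append, hsplit]
        have hc1 : r1.support.count x = 1 := SimpleGraph.Walk.count_support_takeUntil_eq_one r hxr
        have hr2len : 1 ≤ r2.length := by
          by_contra hcon
          have : r2.length = 0 := by omega
          have hnil : r2 = SimpleGraph.Walk.nil := SimpleGraph.Walk.nil_iff_eq_nil.mp (SimpleGraph.Walk.length_eq_zero_iff.mp this)
          have : r.support.count x = 1 := by
            rw [← hsplit, SimpleGraph.Walk.support_append, List.count_append, hnil]
            simpa using hc1
          omega
        -- two closed walks
        have hplen : p.length = (SimpleGraph.Walk.cons hadj r1).length + r2.length := by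
          rw [← hqlen, hq2]
          simp [SimpleGraph.Walk.length_cons]
          omega
        have hw1 : (SimpleGraph.Walk.cons hadj r1).length ≥ 1 := by
          simp [SimpleGraph.Walk.length_cons]
        rw [Nat.odd_iff] at hodd
        rcases Nat.even_or_odd (SimpleGraph.Walk.cons hadj r1).length with hpar | hpar
        · -- r2 odd
          have hodd2 : Odd r2.length := by
            rw [Nat.even_iff] at hpar; rw [Nat.odd_iff]; omega
          have := ih x r2 (by omega) hodd2
          omega
        · have := ih x (SimpleGraph.Walk.cons hadj r1) (by omega) hpar
          omega



lemma sum_split_ends (n : ℕ) (h : ℕ → ℝ) :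
    ∑ i ∈ range (n+2), h i = h 0 + (∑ i ∈ range n, h (i+1)) + h (n+1) := by
  rw [Finset.sum_range_succ, Finset.sum_range_succ']
  ring

lemma sum_pairs (n : ℕ) (b : ℕ → ℝ) :
    ∑ j ∈ range (2*n), b j = ∑ i ∈ range n, (b (2*i) + b (2*i+1)) := by
  induction n with
  | zero => simp
  | succ n ih =>
    have : 2 * (n+1) = (2*n) + 1 + 1 := by ring
    rw [this, Finset.sum_range_succ, Finset.sum_range_succ, Finset.sum_range_succ, ih]
    ring

lemma sum_split_path (n : ℕ) (b : ℕ → ℝ) :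
    b 0 + (∑ i ∈ range n, (b (2*i+1) + b (2*i+2))) + b (2*n+1) = ∑ j ∈ range (2*n+2), b j := by
  induction n with
  | zero => simp [Finset.sum_range_succ]
  | succ n ih =>
    have h1 : 2*(n+1)+2 = (2*n+2) + 1 + 1 := by ring
    have hr : ∑ j ∈ range (2*n+2+1+1), b j
        = (∑ j ∈ range (2*n+2), b j) + b (2*n+2) + b (2*n+2+1) := by
      rw [Finset.sum_range_succ, Finset.sum_range_succ]
    rw [h1, hr, ← ih, Finset.sum_range_succ]
    have h2 : 2*(n+1)+1 = 2*n+2+1 := by ring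
    rw [h2]
    ring



def edgeF {V : Type*} (ρ : ℕ) (a : ℕ → V) (u u' : V) : ℕ → Sym2 V :=
  fun i => if i = 0 then s(u, a 0) else if i = ρ - 1 then s(u', a (2*ρ-3))
    else s(a (2*i-1), a (2*i))

noncomputable def epc {V : Type*} [DecidableEq V] (C : Finset V) (e : Sym2 V) : ℝ :=
  ∑ v ∈ C, if v ∈ e then (1:ℝ) else 0

lemma epc_pair {V : Type*} [DecidableEq V] (C : Finset V) {x y : V} (hxy : x ≠ y) :
    epc C s(x,y) = (if x ∈ C then (1:ℝ) else 0) + (if y ∈ C then (1:ℝ) else 0) := by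
  unfold epc
  have : ∀ v ∈ C, (if v ∈ s(x,y) then (1:ℝ) else 0)
      = (if v = x then (1:ℝ) else 0) + (if v = y then (1:ℝ) else 0) := by
    intro v _
    by_cases h1 : v = x
    · subst h1; simp [Sym2.mem_iff, hxy]
    · by_cases h2 : v = y
      · subst h2; simp [Sym2.mem_iff, h1]
      · simp [Sym2.mem_iff, h1, h2]
  rw [Finset.sum_congr rfl this, Finset.sum_add_distrib,
    Finset.sum_ite_eq' C x (fun _ => (1:ℝ)), Finset.sum_ite_eq' C y (fun _ => (1:ℝ))]

section Data
set_option linter.unusedSectionVars false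
variable {V : Type*} [DecidableEq V] {G : SimpleGraph V} {I : Finset V} {ρ : ℕ}
  {a : ℕ → V} {u u' : V}

lemma edgeF_cases (hρ : 2 ≤ ρ) : ∀ i < ρ, (i = 0 ∧ edgeF ρ a u u' i = s(u, a 0)) ∨
    ((1 ≤ i ∧ i ≤ ρ-2) ∧ edgeF ρ a u u' i = s(a (2*i-1), a (2*i))) ∨
    (i = ρ-1 ∧ edgeF ρ a u u' i = s(u', a (2*ρ-3))) := by
  intro i hi
  unfold edgeF
  by_cases h0 : i = 0
  · left; simp [h0]
  · by_cases h1 : i = ρ-1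
    · right; right
      have hne : ρ - 1 ≠ 0 := by omega
      simp [h0, h1, hne]
    · right; left; simp [h0, h1]; omega

lemma adjMid (hρ : 2 ≤ ρ) (hd : ShortCycData G I ρ a u u') :
    ∀ i, 1 ≤ i → i ≤ ρ-2 → G.Adj (a (2*i-1)) (a (2*i)) := by
  intro i h1 h2
  have h := hd.2.2.2.1 (2*i-1) (by omega)
  have : 2*i-1+1 = 2*i := by omega
  rwa [this] at h

lemma edgeF_mem (hρ : 2 ≤ ρ) (hd : ShortCycData G I ρ a u u') :
    ∀ i < ρ, edgeF ρ a u u' i ∈ G.edgeSet := by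
  intro i hi
  rcases edgeF_cases (a := a) (u := u) (u' := u') hρ i hi with ⟨_, he⟩ | ⟨⟨hi1, hi2⟩, he⟩ | ⟨_, he⟩ <;> rw [he, SimpleGraph.mem_edgeSet]
  · exact hd.2.2.2.2.2.1
  · exact adjMid hρ hd i hi1 hi2
  · exact hd.2.2.2.2.2.2

lemma edgeF_inj (hρ : 2 ≤ ρ) (hd : ShortCycData G I ρ a u u') :
    ∀ i < ρ, ∀ j < ρ, edgeF ρ a u u' i = edgeF ρ a u u' j → i = j := by
  have hinj := hd.2.2.2.2.1
  have hnI := hd.2.2.1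
  intro i hi j hj hij
  have key : ∀ (x : V) (k : ℕ), k ≤ 2*ρ-3 → (x = a k ∨ a k = x) → x ∈ I → False := by
    intro x k hk hx hxI
    rcases hx with rfl | h
    · exact hnI k hk hxI
    · exact hnI k hk (h ▸ hxI)
  by_contra hne
  rcases edgeF_cases (a := a) (u := u) (u' := u') hρ i hi with ⟨hi0, hei⟩ | ⟨⟨hi1, hi2⟩, hei⟩ | ⟨hi0, hei⟩ <;>
    rcases edgeF_cases (a := a) (u := u) (u' := u') hρ j hj with ⟨hj0, hej⟩ | ⟨⟨hj1, hj2⟩, hej⟩ | ⟨hj0, hej⟩ <;>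
      rw [hei, hej] at hij <;> rcases Sym2.eq_iff.mp hij with ⟨e1, e2⟩ | ⟨e1, e2⟩
  all_goals first
  | omega
  | (have := hinj _ (by omega) _ (by omega) e1; omega)
  | (have := hinj _ (by omega) _ (by omega) e2; omega)
  | exact key _ _ (by omega) (Or.inl e1) hd.1
  | exact key _ _ (by omega) (Or.inr e1) hd.1
  | exact key _ _ (by omega) (Or.inl e1) hd.2.1
  | exact key _ _ (by omega) (Or.inr e1) hd.2.1
  | exact key _ _ (by omega) (Or.inl e2) hd.1
  | exact key _ _ (by omega) (Or.inr e2) hd.1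
  | exact key _ _ (by omega) (Or.inl e2) hd.2.1
  | exact key _ _ (by omega) (Or.inr e2) hd.2.1
end Data

section Data2
variable {V : Type*} [Fintype V] [DecidableEq V] {G : SimpleGraph V} {I : Finset V} {ρ : ℕ}
  {a : ℕ → V} {u u' : V}

lemma cond_iff (hρ : 2 ≤ ρ) (e : Sym2 V) :
    (e = s(u, a 0) ∨ e = s(u', a (2 * ρ - 3)) ∨
      ∃ i ∈ Finset.Icc 1 (ρ - 2), e = s(a (2 * i - 1), a (2 * i)))
    ↔ ∃ i ∈ range ρ, edgeF ρ a u u' i = e := by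
  constructor
  · rintro (h | h | ⟨i, hi, h⟩)
    · exact ⟨0, by simp [mem_range]; omega, by simp [edgeF, h]⟩
    · refine ⟨ρ-1, by simp [mem_range]; omega, ?_⟩
      have h1 : ρ - 1 ≠ 0 := by omega
      simp [edgeF, h1, h]
    · rw [Finset.mem_Icc] at hi
      refine ⟨i, by simp [mem_range]; omega, ?_⟩
      have h1 : i ≠ 0 := by omega
      have h2 : i ≠ ρ-1 := by omega
      simp [edgeF, h1, h2, h]
  · rintro ⟨i, hi, h⟩
    rw [mem_range] at hi
    rcases edgeF_cases (a := a) (u := u) (u' := u') hρ i hi with ⟨_, he⟩ | ⟨⟨h1, h2⟩, he⟩ | ⟨_, he⟩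
    · left; rw [← h, he]
    · right; right; exact ⟨i, Finset.mem_Icc.mpr ⟨h1, h2⟩, by rw [← h, he]⟩
    · right; left; rw [← h, he]

lemma ysum_yCyc (hρ : 2 ≤ ρ) (hd : ShortCycData G I ρ a u u') (v : V) :
    ysum (yCyc ρ a u u') (fun e => e ∈ G.edgeSet ∧ v ∈ e)
      = ∑ i ∈ range ρ, (if v ∈ edgeF ρ a u u' i then 1/(ρ:ℝ) else 0) := by
  classical
  set Em : Finset (Sym2 V) := (range ρ).image (edgeF ρ a u u') with hEmdef
  have hEm : ∀ e : Sym2 V, e ∈ Em ↔ (e = s(u, a 0) ∨ e = s(u', a (2 * ρ - 3)) ∨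
      ∃ i ∈ Finset.Icc 1 (ρ - 2), e = s(a (2 * i - 1), a (2 * i))) := by
    intro e
    rw [hEmdef, Finset.mem_image]
    exact (cond_iff hρ e).symm
  have hsub : ∀ e ∈ Em, e ∈ G.edgeSet := by
    intro e he
    rw [hEmdef, Finset.mem_image] at he
    obtain ⟨i, hi, rfl⟩ := he
    exact edgeF_mem hρ hd i (mem_range.mp hi)
  simp only [ysum, yCyc, ← hEm]
  trans (∑ x : Sym2 V, if x ∈ Em then (if v ∈ x then 1/(ρ:ℝ) else 0) else 0)
  · apply Finset.sum_congr rfl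
    intro e _
    by_cases h1 : e ∈ Em
    · have h2 := hsub e h1
      by_cases h3 : v ∈ e <;> simp [h1, h2, h3]
    · simp [h1]
  · rw [Finset.sum_ite_mem, Finset.univ_inter, hEmdef, Finset.sum_image]
    intro i hi j hj h
    exact edgeF_inj hρ hd i (mem_range.mp hi) j (mem_range.mp hj) h

lemma sum_over_C (hρ : 2 ≤ ρ) (hd : ShortCycData G I ρ a u u') (C : Finset V) :
    ∑ v ∈ C, ysum (yCyc ρ a u u') (fun e => e ∈ G.edgeSet ∧ v ∈ e)
      = (1/(ρ:ℝ)) * ∑ i ∈ range ρ, epc C (edgeF ρ a u u' i) := by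
  rw [Finset.sum_congr rfl (fun v _ => ysum_yCyc hρ hd v), Finset.sum_comm, Finset.mul_sum]
  apply Finset.sum_congr rfl
  intro i _
  unfold epc
  rw [Finset.mul_sum]
  apply Finset.sum_congr rfl
  intro v _
  by_cases h : v ∈ edgeF ρ a u u' i <;> simp [h]

end Data2

section Walks
variable {V : Type*} [Fintype V] [DecidableEq V] {G : SimpleGraph V} {I : Finset V} {ρ : ℕ}
  {a : ℕ → V} {u u' : V}

lemma contract_adj_some {x y : V} (hx : x ∉ (↑I : Set V)) (hy : y ∉ (↑I : Set V))
    (h : G.Adj x y) : (contract G ↑I).Adj (some ⟨x, hx⟩) (some ⟨y, hy⟩) := by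
  rw [contract, SimpleGraph.fromRel_adj]
  refine ⟨?_, Or.inl h⟩
  simp only [ne_eq, Option.some.injEq, Subtype.mk.injEq]
  exact h.ne

lemma contract_adj_none {x s : V} (hx : x ∉ (↑I : Set V))
    (hs : s ∈ (↑I : Set V)) (h : G.Adj s x) : (contract G ↑I).Adj none (some ⟨x, hx⟩) := by
  rw [contract, SimpleGraph.fromRel_adj]
  exact ⟨by simp, Or.inr ⟨s, hs, h.symm⟩⟩

lemma walk_cast_len {W : Type*} {H : SimpleGraph W} {z x y : W} (h : x = y) (p : H.Walk z x)
    {n : ℕ} (hn : p.length = n) : ∃ q : H.Walk z y, q.length = n := by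
  subst h; exact ⟨p, hn⟩

lemma memCoe {j : ℕ} (hd : ShortCycData G I ρ a u u') (hj : j ≤ 2*ρ-3) :
    a j ∉ (↑I : Set V) := by
  simpa using hd.2.2.1 j hj

lemma walk_to (hρ : 2 ≤ ρ) (hd : ShortCycData G I ρ a u u') :
    ∀ j (hj : j ≤ 2*ρ-3),
      ∃ p : (contract G ↑I).Walk none (some ⟨a j, memCoe hd hj⟩), p.length = j + 1 := by
  intro j
  induction j with
  | zero =>
    intro hj
    exact ⟨SimpleGraph.Walk.cons (contract_adj_none _ (by simpa using hd.1) hd.2.2.2.2.2.1)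
      SimpleGraph.Walk.nil, by simp⟩
  | succ j ih =>
    intro hj
    obtain ⟨p, hp⟩ := ih (by omega)
    refine ⟨p.concat (contract_adj_some _ _ (hd.2.2.2.1 j (by omega))), ?_⟩
    rw [SimpleGraph.Walk.length_concat, hp]

lemma walk_from_aux (hρ : 2 ≤ ρ) (hd : ShortCycData G I ρ a u u') :
    ∀ m, ∀ j, j + m = 2*ρ-3 → ∀ (hj : j ≤ 2*ρ-3),
      ∃ p : (contract G ↑I).Walk none (some ⟨a j, memCoe hd hj⟩), p.length = m + 1 := by
  intro m
  induction m with
  | zero =>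
    intro j hjm hj
    have : j = 2*ρ-3 := by omega
    subst this
    exact ⟨SimpleGraph.Walk.cons (contract_adj_none _ (by simpa using hd.2.1) hd.2.2.2.2.2.2)
      SimpleGraph.Walk.nil, by simp⟩
  | succ m ih =>
    intro j hjm hj
    obtain ⟨p, hp⟩ := ih (j+1) (by omega) (by omega)
    refine ⟨p.concat ((contract_adj_some _ _ (hd.2.2.2.1 j (by omega))).symm), ?_⟩
    rw [SimpleGraph.Walk.length_concat, hp]

lemma walk_from (hρ : 2 ≤ ρ) (hd : ShortCycData G I ρ a u u') (j : ℕ) (hj : j ≤ 2*ρ-3) :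
    ∃ p : (contract G ↑I).Walk none (some ⟨a j, memCoe hd hj⟩), p.length = 2*ρ-2-j := by
  obtain ⟨p, hp⟩ := walk_from_aux hρ hd (2*ρ-3-j) j (by omega) hj
  exact ⟨p, by omega⟩

lemma distA (hρ : 2 ≤ ρ) (hd : ShortCycData G I ρ a u u')
    (K : ∀ (x : Option {v : V // v ∉ (↑I : Set V)}) (p : (contract G ↑I).Walk x x),
      Odd p.length → 2*ρ-1 ≤ p.length)
    (j : ℕ) (hj : j ≤ 2*ρ-3) :
    (contract G ↑I).dist none (some ⟨a j, memCoe hd hj⟩) = min (j+1) (2*ρ-2-j) ∧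
      (contract G ↑I).Reachable none (some ⟨a j, memCoe hd hj⟩) := by
  obtain ⟨p1, hp1⟩ := walk_to hρ hd j hj
  obtain ⟨p2, hp2⟩ := walk_from hρ hd j hj
  have hreach : (contract G ↑I).Reachable none (some ⟨a j, memCoe hd hj⟩) := ⟨p1⟩
  refine ⟨?_, hreach⟩
  have hub1 := SimpleGraph.dist_le p1
  have hub2 := SimpleGraph.dist_le p2
  obtain ⟨pt, hpt⟩ := hreach.exists_walk_length_eq_dist
  set t := (contract G ↑I).dist none (some ⟨a j, memCoe hd hj⟩) with ht
  by_contra hcon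
  have h1 : t < j + 1 := by omega
  have h2 : t < 2*ρ-2-j := by omega
  have q1len : (p1.append pt.reverse).length = (j+1) + t := by
    rw [SimpleGraph.Walk.length_append, SimpleGraph.Walk.length_reverse, hp1, hpt]
  have q2len : (p2.append pt.reverse).length = (2*ρ-2-j) + t := by
    rw [SimpleGraph.Walk.length_append, SimpleGraph.Walk.length_reverse, hp2, hpt]
  have hpar : Odd ((j+1) + t) ∨ Odd ((2*ρ-2-j) + t) := by
    rw [Nat.odd_iff, Nat.odd_iff]; omega
  rcases hpar with hodd | hodd
  · have := K none (p1.append pt.reverse) (q1len ▸ hodd)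
    omega
  · have := K none (p2.append pt.reverse) (q2len ▸ hodd)
    omega

end Walks

lemma fin2_eq_add_one {x y : Fin 2} (h : x ≠ y) : y = x + 1 := by revert x y; decide

lemma fin2_add11 : ∀ x : Fin 2, x + 1 + 1 = x := by decide

lemma fin2_cases : ∀ x : Fin 2, x = 0 ∨ x = 1 := by decide

lemma fin2_add_one_ne : ∀ x : Fin 2, x + 1 ≠ x := by decide

section Color
variable {V : Type*} [Fintype V] [DecidableEq V] {G : SimpleGraph V} {I : Finset V} {ρ : ℕ}
  {a : ℕ → V} {u u' : V}

lemma gdel_adj {x y : V} (hx : x ∉ I) (hy : y ∉ I) (h : G.Adj x y) : (Gdel G ↑I).Adj x y := by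
  rw [Gdel, SimpleGraph.fromRel_adj]
  exact ⟨h.ne, Or.inl ⟨h, by simpa using hx, by simpa using hy⟩⟩

lemma colAlt (hρ : 2 ≤ ρ) (hd : ShortCycData G I ρ a u u')
    (col : (Gdel G ↑I).Coloring (Fin 2)) :
    ∀ j, j ≤ 2*ρ-3 → col (a j) = (if Even j then col (a 0) else col (a 0) + 1) := by
  intro j
  induction j with
  | zero => intro _; simp
  | succ j ih =>
    intro hj
    have hne := col.valid (gdel_adj (hd.2.2.1 j (by omega)) (hd.2.2.1 (j+1) (by omega))
      (hd.2.2.2.1 j (by omega)))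
    have hstep : col (a (j+1)) = col (a j) + 1 := fin2_eq_add_one hne
    rw [hstep, ih (by omega)]
    by_cases he : Even j
    · rw [if_pos he, if_neg (by simp [Nat.even_add_one, he])]
    · rw [if_neg he, if_pos (by simp [Nat.even_add_one, he]), fin2_add11]

lemma colNe (hρ : 2 ≤ ρ) (hd : ShortCycData G I ρ a u u')
    (col : (Gdel G ↑I).Coloring (Fin 2)) :
    col (a (2*ρ-3)) = col (a 0) + 1 := by
  rw [colAlt hρ hd col (2*ρ-3) le_rfl, if_neg]
  rw [Nat.even_iff]
  omega

end Color

open scoped Classical in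
/-- The independent set whose complement is the optimal cover. -/
def SP {V : Type*} [Fintype V] [DecidableEq V] (G : SimpleGraph V) (I : Finset V) (ρ : ℕ)
    (col : V → Fin 2) (v : V) : Prop :=
  v ∈ I ∨ ∃ h : v ∉ (↑I : Set V), (contract G ↑I).Reachable none (some ⟨v, h⟩) ∧
    ((Even ((contract G ↑I).dist none (some ⟨v, h⟩)) ∧
        (contract G ↑I).dist none (some ⟨v, h⟩) ≤ ρ-2) ∨
      ((contract G ↑I).dist none (some ⟨v, h⟩) = ρ-1 ∧ Even (ρ-1) ∧ col v = 0))

section SPfacts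
variable {V : Type*} [Fintype V] [DecidableEq V] {G : SimpleGraph V} {I : Finset V} {ρ : ℕ}
  {a : ℕ → V} {u u' : V}

lemma SP_indep (hρ : 2 ≤ ρ) (hI : IsIndep G I)
    (K : ∀ (x : Option {v : V // v ∉ (↑I : Set V)}) (p : (contract G ↑I).Walk x x),
      Odd p.length → 2*ρ-1 ≤ p.length)
    (col : (Gdel G ↑I).Coloring (Fin 2)) :
    ∀ x y, G.Adj x y → SP G I ρ col x → SP G I ρ col y → False := by
  have main : ∀ x y, G.Adj x y → x ∈ I → SP G I ρ col y → False := by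
    intro x y hadj hx hy
    rcases hy with hy | ⟨hy, hreach, hcase⟩
    · exact hI hx hy hadj
    · have hadj' := contract_adj_none hy (by simpa using hx) hadj
      have hle : (contract G ↑I).dist none (some ⟨y, hy⟩) ≤ 1 :=
        SimpleGraph.dist_le (SimpleGraph.Walk.cons hadj' SimpleGraph.Walk.nil)
      have hne : (contract G ↑I).dist none (some ⟨y, hy⟩) ≠ 0 := by
        intro h0
        exact (by simp : (none : Option {v : V // v ∉ (↑I : Set V)}) ≠ some ⟨y, hy⟩)
          (hreach.dist_eq_zero_iff.mp h0)
      have h1 : (contract G ↑I).dist none (some ⟨y, hy⟩) = 1 := by omega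
      rcases hcase with ⟨he, _⟩ | ⟨he, hev, _⟩
      · rw [h1] at he
        simp [Nat.even_iff] at he
      · rw [h1] at he
        rw [← he] at hev
        simp [Nat.even_iff] at hev
  intro x y hadj hx hy
  rcases hx with hx | ⟨hx, hreachx, hcasex⟩
  · exact main x y hadj hx hy
  rcases hy with hy | ⟨hy, hreachy, hcasey⟩
  · exact main y x hadj.symm hy (Or.inr ⟨hx, hreachx, hcasex⟩)
  -- both outside I
  obtain ⟨px, hpx⟩ := hreachx.exists_walk_length_eq_dist
  obtain ⟨py, hpy⟩ := hreachy.exists_walk_length_eq_dist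
  have hadj' := contract_adj_some hx hy hadj
  set dx := (contract G ↑I).dist none (some ⟨x, hx⟩) with hdx
  set dy := (contract G ↑I).dist none (some ⟨y, hy⟩) with hdy
  have hex : Even dx := by
    rcases hcasex with ⟨he, _⟩ | ⟨he, hev, _⟩
    · exact he
    · rw [he]; exact hev
  have hey : Even dy := by
    rcases hcasey with ⟨he, _⟩ | ⟨he, hev, _⟩
    · exact he
    · rw [he]; exact hev
  have hxle : dx ≤ ρ-1 := by rcases hcasex with ⟨_, h⟩ | ⟨h, _⟩ <;> omega
  have hyle : dy ≤ ρ-1 := by rcases hcasey with ⟨_, h⟩ | ⟨h, _⟩ <;> omega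
  have cwlen : (px.append (SimpleGraph.Walk.cons hadj' py.reverse)).length = dx + (1 + dy) := by
    rw [SimpleGraph.Walk.length_append, SimpleGraph.Walk.length_cons,
      SimpleGraph.Walk.length_reverse, hpx, hpy]
    omega
  have hoddw : Odd (dx + (1 + dy)) := by
    rw [Nat.even_iff] at hex hey; rw [Nat.odd_iff]; omega
  have hK := K none (px.append (SimpleGraph.Walk.cons hadj' py.reverse)) (cwlen ▸ hoddw)
  rw [cwlen] at hK
  have hdxe : dx = ρ-1 := by omega
  have hdye : dy = ρ-1 := by omega
  have hcx : col x = 0 := by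
    rcases hcasex with ⟨_, h⟩ | ⟨_, _, h⟩
    · omega
    · exact h
  have hcy : col y = 0 := by
    rcases hcasey with ⟨_, h⟩ | ⟨_, _, h⟩
    · omega
    · exact h
  exact col.valid (gdel_adj (by simpa using hx) (by simpa using hy) hadj) (hcx.trans hcy.symm)

lemma SP_aj (hρ : 2 ≤ ρ) (hd : ShortCycData G I ρ a u u')
    (K : ∀ (x : Option {v : V // v ∉ (↑I : Set V)}) (p : (contract G ↑I).Walk x x),
      Odd p.length → 2*ρ-1 ≤ p.length)
    (col : V → Fin 2) (j : ℕ) (hj : j ≤ 2*ρ-3) :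
    SP G I ρ col (a j) ↔ ((Even (min (j+1) (2*ρ-2-j)) ∧ min (j+1) (2*ρ-2-j) ≤ ρ-2) ∨
      (min (j+1) (2*ρ-2-j) = ρ-1 ∧ Even (ρ-1) ∧ col (a j) = 0)) := by
  have hmem := memCoe hd hj
  have hda := distA hρ hd K j hj
  constructor
  · rintro (h | ⟨h, hreach, hcase⟩)
    · exact absurd h (by simpa using hmem)
    · have heq : (contract G ↑I).dist none (some ⟨a j, h⟩) = min (j+1) (2*ρ-2-j) := hda.1
      rw [heq] at hcase
      exact hcase
  · intro hcase
    right
    refine ⟨hmem, hda.2, ?_⟩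
    have heq : (contract G ↑I).dist none (some ⟨a j, hmem⟩) = min (j+1) (2*ρ-2-j) := hda.1
    rw [heq]
    exact hcase

lemma SP_u (hd : ShortCycData G I ρ a u u') (col : V → Fin 2) : SP G I ρ col u := Or.inl hd.1

lemma SP_u' (hd : ShortCycData G I ρ a u u') (col : V → Fin 2) : SP G I ρ col u' := Or.inl hd.2.1

end SPfacts

section Evals
variable {V : Type*} [Fintype V] [DecidableEq V] {G : SimpleGraph V} {I : Finset V} {ρ : ℕ}
  {a : ℕ → V} {u u' : V}

lemma sum_edgeF_eval (hρ : 2 ≤ ρ) (F : Sym2 V → ℝ) :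
    ∑ i ∈ range ρ, F (edgeF ρ a u u' i)
      = F s(u, a 0) + (∑ i ∈ range (ρ-2), F s(a (2*i+1), a (2*i+2))) + F s(u', a (2*ρ-3)) := by
  obtain ⟨n, rfl⟩ : ∃ n, ρ = n + 2 := ⟨ρ - 2, by omega⟩
  rw [sum_split_ends n (fun i => F (edgeF (n+2) a u u' i))]
  have e0 : edgeF (n+2) a u u' 0 = s(u, a 0) := by simp [edgeF]
  have eend : edgeF (n+2) a u u' (n+1) = s(u', a (2*(n+2)-3)) := by
    have h1 : n + 1 ≠ 0 := by omega
    have h2 : n + 1 = n + 2 - 1 := by omega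
    simp [edgeF, h1, if_neg h1, ← h2]
  have hmid : ∀ i ∈ range n, F (edgeF (n+2) a u u' (i+1)) = F s(a (2*i+1), a (2*i+2)) := by
    intro i hi
    have h1 : i + 1 ≠ 0 := by omega
    have h2 : i + 1 ≠ (n+2) - 1 := by rw [mem_range] at hi; omega
    have h3 : 2*(i+1)-1 = 2*i+1 := by omega
    have h4 : 2*(i+1) = 2*i+2 := by omega
    have h5 : 2*i+2-1 = 2*i+1 := by omega
    simp only [edgeF, if_neg h1, if_neg h2, h3, h4, h5]
  rw [e0, eend, Finset.sum_congr rfl hmid]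
  norm_num

lemma ne_ua0 (hρ : 2 ≤ ρ) (hd : ShortCycData G I ρ a u u') : u ≠ a 0 :=
  fun h => hd.2.2.1 0 (by omega) (h ▸ hd.1)

lemma ne_uaend (hρ : 2 ≤ ρ) (hd : ShortCycData G I ρ a u u') : u' ≠ a (2*ρ-3) :=
  fun h => hd.2.2.1 (2*ρ-3) le_rfl (h ▸ hd.2.1)

lemma ne_mid (hρ : 2 ≤ ρ) (hd : ShortCycData G I ρ a u u') {i : ℕ} (hi : i < ρ-2) :
    a (2*i+1) ≠ a (2*i+2) :=
  fun h => by have := hd.2.2.2.2.1 (2*i+1) (by omega) (2*i+2) (by omega) h; omega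

lemma adj_mid' (hρ : 2 ≤ ρ) (hd : ShortCycData G I ρ a u u') {i : ℕ} (hi : i < ρ-2) :
    G.Adj (a (2*i+1)) (a (2*i+2)) := by
  have h := hd.2.2.2.1 (2*i+1) (by omega)
  have h2 : 2*i+1+1 = 2*i+2 := by omega
  rwa [h2] at h

lemma eval_I (hρ : 2 ≤ ρ) (hd : ShortCycData G I ρ a u u') :
    ∑ i ∈ range ρ, epc I (edgeF ρ a u u' i) = 2 := by
  rw [sum_edgeF_eval hρ]
  have h0 : epc I s(u, a 0) = 1 := by
    rw [epc_pair I (ne_ua0 hρ hd), if_pos hd.1, if_neg (hd.2.2.1 0 (by omega))]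
    norm_num
  have hend : epc I s(u', a (2*ρ-3)) = 1 := by
    rw [epc_pair I (ne_uaend hρ hd), if_pos hd.2.1, if_neg (hd.2.2.1 (2*ρ-3) le_rfl)]
    norm_num
  have hmid : ∀ i ∈ range (ρ-2), epc I s(a (2*i+1), a (2*i+2)) = 0 := by
    intro i hi
    rw [mem_range] at hi
    rw [epc_pair I (ne_mid hρ hd hi), if_neg (hd.2.2.1 (2*i+1) (by omega)),
      if_neg (hd.2.2.1 (2*i+2) (by omega))]
    norm_num
  rw [h0, hend, Finset.sum_congr rfl hmid]
  simp
  norm_num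

lemma eval_VC (hρ : 2 ≤ ρ) (hd : ShortCycData G I ρ a u u') (C : Finset V) (hC : IsVC G C) :
    (ρ:ℝ) ≤ ∑ i ∈ range ρ, epc C (edgeF ρ a u u' i) := by
  have hpt : ∀ i ∈ range ρ, (1:ℝ) ≤ epc C (edgeF ρ a u u' i) := by
    intro i hi
    rw [mem_range] at hi
    have key : ∀ x y : V, G.Adj x y → (1:ℝ) ≤ epc C s(x, y) := by
      intro x y hadj
      rw [epc_pair C hadj.ne]
      rcases hC hadj with h | h
      · rw [if_pos h]
        have : (0:ℝ) ≤ if y ∈ C then (1:ℝ) else 0 := by positivity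
        linarith
      · rw [if_pos h]
        have : (0:ℝ) ≤ if x ∈ C then (1:ℝ) else 0 := by positivity
        linarith
    rcases edgeF_cases (a := a) (u := u) (u' := u') hρ i hi with ⟨_, he⟩ | ⟨⟨h1, h2⟩, he⟩ | ⟨_, he⟩
    · exact he ▸ key _ _ hd.2.2.2.2.2.1
    · exact he ▸ key _ _ (adjMid hρ hd i h1 h2)
    · exact he ▸ key _ _ hd.2.2.2.2.2.2
  calc (ρ:ℝ) = ∑ _i ∈ range ρ, (1:ℝ) := by simp
  _ ≤ _ := Finset.sum_le_sum hpt

lemma eval_GdelVC (hρ : 2 ≤ ρ) (hd : ShortCycData G I ρ a u u') (C : Finset V)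
    (hC : IsVC (Gdel G ↑I) C) :
    (ρ:ℝ) - 1 ≤ ∑ i ∈ range ρ, epc C (edgeF ρ a u u' i) := by
  rw [sum_edgeF_eval hρ]
  set b : ℕ → ℝ := fun j => if a j ∈ C then (1:ℝ) else 0 with hb
  have hb0 : ∀ j, 0 ≤ b j := by intro j; rw [hb]; positivity
  have h0 : b 0 ≤ epc C s(u, a 0) := by
    rw [epc_pair C (ne_ua0 hρ hd), hb]
    have : (0:ℝ) ≤ if u ∈ C then (1:ℝ) else 0 := by positivity
    simp only []
    linarith
  have hend : b (2*ρ-3) ≤ epc C s(u', a (2*ρ-3)) := by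
    rw [epc_pair C (ne_uaend hρ hd), hb]
    have : (0:ℝ) ≤ if u' ∈ C then (1:ℝ) else 0 := by positivity
    simp only []
    linarith
  have hmid : ∀ i ∈ range (ρ-2), epc C s(a (2*i+1), a (2*i+2)) = b (2*i+1) + b (2*i+2) := by
    intro i hi
    rw [mem_range] at hi
    rw [epc_pair C (ne_mid hρ hd hi)]
  rw [Finset.sum_congr rfl hmid]
  have key : (ρ:ℝ) - 1 ≤ b 0 + (∑ i ∈ range (ρ-2), (b (2*i+1) + b (2*i+2))) + b (2*ρ-3) := by
    obtain ⟨n, rfl⟩ : ∃ n, ρ = n + 2 := ⟨ρ - 2, by omega⟩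
    have h1 : 2*(n+2)-3 = 2*n+1 := by omega
    have h2 : (n+2)-2 = n := by omega
    rw [h1, h2, sum_split_path n b]
    have h3 : 2*n+2 = 2*(n+1) := by omega
    rw [h3, sum_pairs (n+1) b]
    have hpair : ∀ i ∈ range (n+1), (1:ℝ) ≤ b (2*i) + b (2*i+1) := by
      intro i hi
      rw [mem_range] at hi
      have hadj : (Gdel G ↑I).Adj (a (2*i)) (a (2*i+1)) := by
        apply gdel_adj (hd.2.2.1 (2*i) (by omega)) (hd.2.2.1 (2*i+1) (by omega))
        exact hd.2.2.2.1 (2*i) (by omega)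
      rcases hC hadj with h | h <;> rw [hb] <;> simp only [] <;> rw [if_pos h]
      · have : (0:ℝ) ≤ if a (2*i+1) ∈ C then (1:ℝ) else 0 := by positivity
        linarith
      · have : (0:ℝ) ≤ if a (2*i) ∈ C then (1:ℝ) else 0 := by positivity
        linarith
    calc ((n+2:ℕ):ℝ) - 1 = ∑ _i ∈ range (n+1), (1:ℝ) := by simp; push_cast; ring
    _ ≤ _ := Finset.sum_le_sum hpair
  linarith

end Evals

lemma fin2_zero_cases : ∀ x : Fin 2, (x = 0 ∧ x + 1 ≠ 0) ∨ (x ≠ 0 ∧ x + 1 = 0) := by decide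

section Evals2
variable {V : Type*} [Fintype V] [DecidableEq V] {G : SimpleGraph V} {I : Finset V} {ρ : ℕ}
  {a : ℕ → V} {u u' : V}

lemma epc_one_left {C : Finset V} {x y : V} (hxy : x ≠ y) (h1 : x ∈ C) (h2 : y ∉ C) :
    epc C s(x, y) = 1 := by
  rw [epc_pair C hxy, if_pos h1, if_neg h2]; norm_num

lemma epc_one_right {C : Finset V} {x y : V} (hxy : x ≠ y) (h1 : x ∉ C) (h2 : y ∈ C) :
    epc C s(x, y) = 1 := by
  rw [epc_pair C hxy, if_neg h1, if_pos h2]; norm_num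

lemma eval_GdelCover (hρ : 2 ≤ ρ) (hd : ShortCycData G I ρ a u u')
    (col : (Gdel G ↑I).Coloring (Fin 2)) (C : Finset V)
    (hC : ∀ v, v ∈ C ↔ (v ∉ I ∧ col v ≠ 0)) :
    ∑ i ∈ range ρ, epc C (edgeF ρ a u u' i) = (ρ:ℝ) - 1 := by
  rw [sum_edgeF_eval hρ]
  have huC : u ∉ C := fun h => ((hC u).mp h).1 hd.1
  have hu'C : u' ∉ C := fun h => ((hC u').mp h).1 hd.2.1
  have haj : ∀ j, j ≤ 2*ρ-3 → (a j ∈ C ↔ col (a j) ≠ 0) := by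
    intro j hj
    rw [hC]
    simp [hd.2.2.1 j hj]
  have h0 : epc C s(u, a 0) = if col (a 0) ≠ 0 then (1:ℝ) else 0 := by
    rw [epc_pair C (ne_ua0 hρ hd), if_neg huC]
    by_cases h : col (a 0) ≠ 0
    · rw [if_pos ((haj 0 (by omega)).mpr h), if_pos h]; norm_num
    · rw [if_neg (fun hc => h ((haj 0 (by omega)).mp hc)), if_neg h]; norm_num
  have hend : epc C s(u', a (2*ρ-3)) = if col (a 0) + 1 ≠ 0 then (1:ℝ) else 0 := by
    rw [epc_pair C (ne_uaend hρ hd), if_neg hu'C, ← colNe hρ hd col]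
    by_cases h : col (a (2*ρ-3)) ≠ 0
    · rw [if_pos ((haj _ le_rfl).mpr h), if_pos h]; norm_num
    · rw [if_neg (fun hc => h ((haj _ le_rfl).mp hc)), if_neg h]; norm_num
  have hmid : ∀ i ∈ range (ρ-2), epc C s(a (2*i+1), a (2*i+2)) = 1 := by
    intro i hi
    rw [mem_range] at hi
    have hne := col.valid (gdel_adj (hd.2.2.1 (2*i+1) (by omega)) (hd.2.2.1 (2*i+2) (by omega))
      (adj_mid' hρ hd hi))
    have hcol2 : col (a (2*i+2)) = col (a (2*i+1)) + 1 := fin2_eq_add_one hne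
    rcases fin2_zero_cases (col (a (2*i+1))) with ⟨hz, hnz⟩ | ⟨hnz, hz⟩
    · refine epc_one_right (ne_mid hρ hd hi) ?_ ?_
      · intro hmem
        exact ((haj (2*i+1) (by omega)).mp hmem) hz
      · rw [haj (2*i+2) (by omega), hcol2]
        exact hnz
    · refine epc_one_left (ne_mid hρ hd hi) ?_ ?_
      · rw [haj (2*i+1) (by omega)]
        exact hnz
      · intro hmem
        exact ((haj (2*i+2) (by omega)).mp hmem) (hcol2.trans hz)
  rw [h0, hend, Finset.sum_congr rfl hmid]
  rcases fin2_zero_cases (col (a 0)) with ⟨hz, hnz⟩ | ⟨hnz, hz⟩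
  · rw [if_neg (fun h => h hz), if_pos hnz]
    simp
    have : ((ρ-2:ℕ):ℝ) = (ρ:ℝ) - 2 := by
      have : (2:ℕ) ≤ ρ := hρ
      push_cast [this]
      ring
    rw [this]; ring
  · rw [if_pos hnz, if_neg (fun h => h hz)]
    simp
    have : ((ρ-2:ℕ):ℝ) = (ρ:ℝ) - 2 := by
      have : (2:ℕ) ≤ ρ := hρ
      push_cast [this]
      ring
    rw [this]; ring

lemma eval_SP (hρ : 2 ≤ ρ) (hd : ShortCycData G I ρ a u u')
    (K : ∀ (x : Option {v : V // v ∉ (↑I : Set V)}) (p : (contract G ↑I).Walk x x),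
      Odd p.length → 2*ρ-1 ≤ p.length)
    (col : (Gdel G ↑I).Coloring (Fin 2)) (C : Finset V)
    (hC : ∀ v, v ∈ C ↔ ¬ SP G I ρ (col : V → Fin 2) v) :
    ∑ i ∈ range ρ, epc C (edgeF ρ a u u' i) = (ρ:ℝ) := by
  rw [sum_edgeF_eval hρ]
  have hnotSP : ∀ j, j ≤ 2*ρ-3 → ¬ Even (min (j+1) (2*ρ-2-j)) →
      ¬ SP G I ρ (col : V → Fin 2) (a j) := by
    intro j hj hodd hsp
    rcases (SP_aj hρ hd K _ j hj).mp hsp with ⟨he, _⟩ | ⟨he, hev, _⟩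
    · exact hodd he
    · rw [he] at hodd; exact hodd hev
  have hSPsmall : ∀ j, j ≤ 2*ρ-3 → Even (min (j+1) (2*ρ-2-j)) → min (j+1) (2*ρ-2-j) ≤ ρ-2 →
      SP G I ρ (col : V → Fin 2) (a j) := by
    intro j hj he hle
    exact (SP_aj hρ hd K _ j hj).mpr (Or.inl ⟨he, hle⟩)
  have h0 : epc C s(u, a 0) = 1 := by
    refine epc_one_right (ne_ua0 hρ hd) ?_ ?_
    · rw [hC]; intro h; exact h (SP_u hd _)
    · rw [hC]
      apply hnotSP 0 (by omega)
      rw [Nat.even_iff]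
      omega
  have hend : epc C s(u', a (2*ρ-3)) = 1 := by
    refine epc_one_right (ne_uaend hρ hd) ?_ ?_
    · rw [hC]; intro h; exact h (SP_u' hd _)
    · rw [hC]
      apply hnotSP (2*ρ-3) le_rfl
      rw [Nat.even_iff]
      omega
  have hmid : ∀ i ∈ range (ρ-2), epc C s(a (2*i+1), a (2*i+2)) = 1 := by
    intro i hi
    rw [mem_range] at hi
    by_cases hA : 2*i+2 ≤ ρ-2
    · -- left endpoint in SP (so not in C); right endpoint not in SP (in C)
      refine epc_one_right (ne_mid hρ hd hi) ?_ ?_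
      · rw [hC]
        intro h
        apply h
        apply hSPsmall (2*i+1) (by omega)
        · rw [(by omega : min (2*i+1+1) (2*ρ-2-(2*i+1)) = 2*i+2), Nat.even_iff]; omega
        · omega
      · rw [hC]
        apply hnotSP (2*i+2) (by omega)
        rw [(by omega : min (2*i+2+1) (2*ρ-2-(2*i+2)) = 2*i+3), Nat.even_iff]
        omega
    · by_cases hB : ρ ≤ 2*i+2
      · refine epc_one_left (ne_mid hρ hd hi) ?_ ?_
        · rw [hC]
          apply hnotSP (2*i+1) (by omega)
          rw [(by omega : min (2*i+1+1) (2*ρ-2-(2*i+1)) = 2*ρ-3-2*i), Nat.even_iff]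
          omega
        · rw [hC]
          intro h
          apply h
          apply hSPsmall (2*i+2) (by omega)
          · rw [(by omega : min (2*i+2+1) (2*ρ-2-(2*i+2)) = 2*ρ-4-2*i), Nat.even_iff]; omega
          · omega
      · -- antipodal case : 2*i+2 = ρ-1
        have hCeq : 2*i+2 = ρ-1 := by omega
        have hev : Even (ρ-1) := by rw [Nat.even_iff]; omega
        have hm1 : min (2*i+1+1) (2*ρ-2-(2*i+1)) = ρ-1 := by omega
        have hm2 : min (2*i+2+1) (2*ρ-2-(2*i+2)) = ρ-1 := by omega
        have hiff1 : SP G I ρ (col : V → Fin 2) (a (2*i+1)) ↔ col (a (2*i+1)) = 0 := by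
          rw [SP_aj hρ hd K _ (2*i+1) (by omega), hm1]
          constructor
          · rintro (⟨_, hle⟩ | ⟨_, _, hc⟩)
            · omega
            · exact hc
          · intro hc
            exact Or.inr ⟨rfl, hev, hc⟩
        have hiff2 : SP G I ρ (col : V → Fin 2) (a (2*i+2)) ↔ col (a (2*i+2)) = 0 := by
          rw [SP_aj hρ hd K _ (2*i+2) (by omega), hm2]
          constructor
          · rintro (⟨_, hle⟩ | ⟨_, _, hc⟩)
            · omega
            · exact hc
          · intro hc
            exact Or.inr ⟨rfl, hev, hc⟩
        have hne := col.valid (gdel_adj (hd.2.2.1 (2*i+1) (by omega))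
          (hd.2.2.1 (2*i+2) (by omega)) (adj_mid' hρ hd hi))
        have hcol2 : col (a (2*i+2)) = col (a (2*i+1)) + 1 := fin2_eq_add_one hne
        rcases fin2_zero_cases (col (a (2*i+1))) with ⟨hz, hnz⟩ | ⟨hnz, hz⟩
        · refine epc_one_right (ne_mid hρ hd hi) ?_ ?_
          · rw [hC]; intro h; exact h (hiff1.mpr hz)
          · rw [hC]
            intro h
            rw [hiff2, hcol2] at h
            exact hnz h
        · refine epc_one_left (ne_mid hρ hd hi) ?_ ?_
          · rw [hC]
            intro h
            exact hnz (hiff1.mp h)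
          · rw [hC]; intro h; exact h (hiff2.mpr (hcol2.trans hz))
  rw [h0, hend, Finset.sum_congr rfl hmid]
  simp
  have : ((ρ-2:ℕ):ℝ) = (ρ:ℝ) - 2 := by
    have h2 : (2:ℕ) ≤ ρ := hρ
    push_cast [h2]
    ring
  rw [this]; ring

end Evals2

end RBIST
end RBISTAux

/-- tightness for an independent bipartizing set.  For every convex
combination of the weight functions `w^C` of shortest odd cycles of `G/I`, the ratio
`1 + 1/ρ` is attained. -/
theorem round_bipartize_indep_set_tight {V : Type*} [Fintype V] [DecidableEq V]
    (G : SimpleGraph V) (hnb : ¬ G.Colorable 2)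
    (I : Finset V) (hI : IsIndep G I) (hbip : (Gdel G ↑I).Colorable 2)
    (ρ : ℕ) (hρ : 2 ≤ ρ) (hog : HasOddGirth (contract G ↑I) (2 * ρ - 1))
    (n : ℕ) (hn : 0 < n)
    (a : Fin n → ℕ → V) (u u' : Fin n → V)
    (hdata : ∀ m : Fin n, ShortCycData G I ρ (a m) (u m) (u' m))
    (lam : Fin n → ℝ) (hlam0 : ∀ m, 0 ≤ lam m) (hlam1 : ∑ m, lam m = 1)
    (w : V → ℝ)
    (hw : ∀ v : V, w v = ∑ m : Fin n,
      lam m * ysum (yCyc ρ (a m) (u m) (u' m)) (fun e => e ∈ G.edgeSet ∧ v ∈ e)) :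
    OPT G w = 1 ∧ ∑ v ∈ I, w v = 2 / (ρ : ℝ) ∧
      OPT (Gdel G ↑I) w = ((ρ : ℝ) - 1) / (ρ : ℝ) ∧
      ∑ v ∈ I, w v + OPT (Gdel G ↑I) w = (1 + 1 / (ρ : ℝ)) * OPT G w := by
  classical
  obtain ⟨col⟩ := hbip
  have K : ∀ (x : Option {v : V // v ∉ (↑I : Set V)}) (p : (contract G ↑I).Walk x x),
      Odd p.length → 2*ρ-1 ≤ p.length :=
    fun x p h => RBIST.odd_closed_walk_bound hog.2.2 p.length x p le_rfl h
  have hρ0 : (ρ:ℝ) ≠ 0 := Nat.cast_ne_zero.mpr (by omega)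
  have hρpos : (0:ℝ) < (ρ:ℝ) := by positivity
  have hsum : ∀ C : Finset V, ∑ v ∈ C, w v
      = ∑ m, lam m * ((1/(ρ:ℝ)) *
          ∑ i ∈ Finset.range ρ, RBIST.epc C (RBIST.edgeF ρ (a m) (u m) (u' m) i)) := by
    intro C
    calc ∑ v ∈ C, w v
        = ∑ v ∈ C, ∑ m, lam m * ysum (yCyc ρ (a m) (u m) (u' m))
            (fun e => e ∈ G.edgeSet ∧ v ∈ e) := Finset.sum_congr rfl (fun v _ => hw v)
      _ = ∑ m, ∑ v ∈ C, lam m * ysum (yCyc ρ (a m) (u m) (u' m))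
            (fun e => e ∈ G.edgeSet ∧ v ∈ e) := Finset.sum_comm
      _ = ∑ m, lam m * ∑ v ∈ C, ysum (yCyc ρ (a m) (u m) (u' m))
            (fun e => e ∈ G.edgeSet ∧ v ∈ e) := by
          exact Finset.sum_congr rfl (fun m _ => (Finset.mul_sum _ _ _).symm)
      _ = _ := Finset.sum_congr rfl (fun m _ => by rw [RBIST.sum_over_C hρ (hdata m)])
  set C1 : Finset V := Finset.univ.filter (fun v => ¬ RBIST.SP G I ρ (⇑col) v) with hC1
  have hC1mem : ∀ v, v ∈ C1 ↔ ¬ RBIST.SP G I ρ (⇑col) v := by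
    intro v; rw [hC1]; simp
  set C2 : Finset V := Finset.univ.filter (fun v => v ∉ I ∧ col v ≠ 0) with hC2
  have hC2mem : ∀ v, v ∈ C2 ↔ (v ∉ I ∧ col v ≠ 0) := by
    intro v; rw [hC2]; simp
  have hVC1 : IsVC G C1 := by
    intro x y hadj
    by_contra hcon
    push_neg at hcon
    have hx : RBIST.SP G I ρ (⇑col) x := by
      have := hcon.1; rw [hC1mem, not_not] at this; exact this
    have hy : RBIST.SP G I ρ (⇑col) y := by
      have := hcon.2; rw [hC1mem, not_not] at this; exact this
    exact RBIST.SP_indep hρ hI K col x y hadj hx hy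
  have hVC2 : IsVC (Gdel G ↑I) C2 := by
    intro x y hadj
    have hadj' := hadj
    rw [Gdel, SimpleGraph.fromRel_adj] at hadj'
    obtain ⟨hne, hrel⟩ := hadj'
    have hxy : x ∉ I ∧ y ∉ I := by
      rcases hrel with ⟨_, h2, h3⟩ | ⟨_, h2, h3⟩
      · exact ⟨by simpa using h2, by simpa using h3⟩
      · exact ⟨by simpa using h3, by simpa using h2⟩
    have hcolne : col x ≠ col y := col.valid hadj
    by_cases hx0 : col x = 0
    · right
      rw [hC2mem]
      exact ⟨hxy.2, fun h => hcolne (hx0.trans h.symm)⟩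
    · left
      rw [hC2mem]
      exact ⟨hxy.1, hx0⟩
  have hmain1 : OPT G w = 1 := by
    have hub : (1:ℝ) ∈ {t : ℝ | ∃ C : Finset V, IsVC G C ∧ t = ∑ v ∈ C, w v} := by
      refine ⟨C1, hVC1, ?_⟩
      rw [hsum C1]
      have hper : ∀ m : Fin n, lam m * ((1/(ρ:ℝ)) *
          ∑ i ∈ Finset.range ρ, RBIST.epc C1 (RBIST.edgeF ρ (a m) (u m) (u' m) i)) = lam m := by
        intro m
        rw [RBIST.eval_SP hρ (hdata m) K col C1 hC1mem]
        field_simp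
      rw [Finset.sum_congr rfl (fun m _ => hper m), hlam1]
    have hlb : ∀ t ∈ {t : ℝ | ∃ C : Finset V, IsVC G C ∧ t = ∑ v ∈ C, w v}, (1:ℝ) ≤ t := by
      rintro t ⟨C, hC, rfl⟩
      rw [hsum C]
      calc (1:ℝ) = ∑ m, lam m := hlam1.symm
        _ ≤ _ := by
            apply Finset.sum_le_sum
            intro m _
            have hS := RBIST.eval_VC hρ (hdata m) C hC
            have hq : 1 ≤ (1/(ρ:ℝ)) *
                ∑ i ∈ Finset.range ρ, RBIST.epc C (RBIST.edgeF ρ (a m) (u m) (u' m) i) := by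
              have h1 : (1/(ρ:ℝ)) * (ρ:ℝ) = 1 := by field_simp
              calc (1:ℝ) = (1/(ρ:ℝ)) * (ρ:ℝ) := h1.symm
                _ ≤ _ := by
                    apply mul_le_mul_of_nonneg_left hS
                    positivity
            calc lam m = lam m * 1 := (mul_one _).symm
              _ ≤ _ := by
                  apply mul_le_mul_of_nonneg_left hq (hlam0 m)
    rw [OPT]
    exact IsLeast.csInf_eq ⟨hub, hlb⟩
  have hmain2 : ∑ v ∈ I, w v = 2/(ρ:ℝ) := by
    rw [hsum I]
    have hper : ∀ m : Fin n, lam m * ((1/(ρ:ℝ)) *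
        ∑ i ∈ Finset.range ρ, RBIST.epc I (RBIST.edgeF ρ (a m) (u m) (u' m) i))
          = lam m * (2/(ρ:ℝ)) := by
      intro m
      rw [RBIST.eval_I hρ (hdata m)]
      ring
    rw [Finset.sum_congr rfl (fun m _ => hper m), ← Finset.sum_mul, hlam1, one_mul]
  have hmain3 : OPT (Gdel G ↑I) w = ((ρ:ℝ)-1)/(ρ:ℝ) := by
    have hub : ((ρ:ℝ)-1)/(ρ:ℝ) ∈
        {t : ℝ | ∃ C : Finset V, IsVC (Gdel G ↑I) C ∧ t = ∑ v ∈ C, w v} := by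
      refine ⟨C2, hVC2, ?_⟩
      rw [hsum C2]
      have hper : ∀ m : Fin n, lam m * ((1/(ρ:ℝ)) *
          ∑ i ∈ Finset.range ρ, RBIST.epc C2 (RBIST.edgeF ρ (a m) (u m) (u' m) i))
            = lam m * (((ρ:ℝ)-1)/(ρ:ℝ)) := by
        intro m
        rw [RBIST.eval_GdelCover hρ (hdata m) col C2 hC2mem]
        ring
      rw [Finset.sum_congr rfl (fun m _ => hper m), ← Finset.sum_mul, hlam1, one_mul]
    have hlb : ∀ t ∈ {t : ℝ | ∃ C : Finset V, IsVC (Gdel G ↑I) C ∧ t = ∑ v ∈ C, w v},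
        ((ρ:ℝ)-1)/(ρ:ℝ) ≤ t := by
      rintro t ⟨C, hC, rfl⟩
      rw [hsum C]
      have hper : ∀ m : Fin n, lam m * (((ρ:ℝ)-1)/(ρ:ℝ)) ≤ lam m * ((1/(ρ:ℝ)) *
          ∑ i ∈ Finset.range ρ, RBIST.epc C (RBIST.edgeF ρ (a m) (u m) (u' m) i)) := by
        intro m
        apply mul_le_mul_of_nonneg_left _ (hlam0 m)
        have hS := RBIST.eval_GdelVC hρ (hdata m) C hC
        have h1 : ((ρ:ℝ)-1)/(ρ:ℝ) = (1/(ρ:ℝ)) * ((ρ:ℝ)-1) := by ring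
        rw [h1]
        apply mul_le_mul_of_nonneg_left hS
        positivity
      calc ((ρ:ℝ)-1)/(ρ:ℝ) = ∑ m, lam m * (((ρ:ℝ)-1)/(ρ:ℝ)) := by
            rw [← Finset.sum_mul, hlam1, one_mul]
        _ ≤ _ := Finset.sum_le_sum (fun m _ => hper m)
    rw [OPT]
    exact IsLeast.csInf_eq ⟨hub, hlb⟩
  refine ⟨hmain1, hmain2, hmain3, ?_⟩
  rw [hmain1, hmain2, hmain3]
  field_simp
  ring
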